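/- (Sum relations (eq. 3), four fixed points.) Under the four-vertex hypotheses, for all β ∈ β̂₁, γ ∈ γ̂₁, δ ∈ δ̂₁, ε ∈ ε̂₁, η ∈ η̂₁, λ ∈ λ̂₁ one has: β+γ ∈ ε̂₁, β+δ ∈ η̂₁, β+η ∈ δ̂₁, β+ε ∈ γ̂₁, γ+δ ∈ λ̂₁, γ+ε ∈ β̂₁, γ+λ ∈ δ̂₁, δ+η ∈ β̂₁, δ+λ ∈ γ̂₁, ε+η ∈ λ̂₁, ε+λ ∈ η̂₁, and η+λ ∈ ε̂₁. -/
import Mathlib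


/-- Two multisets of vectors of `V` are *congruent mod `ρ`* if their images under the
quotient map `V → V ⧸ span {ρ}` are equal as multisets. -/
def CongMod {V : Type*} [AddCommGroup V] [Module (ZMod 2) V] (ρ : V)
    (A B : Multiset V) : Prop :=
  A.map ⇑(Submodule.span (ZMod 2) {ρ}).mkQ = B.map ⇑(Submodule.span (ZMod 2) {ρ}).mkQ

section Aux
variable {V : Type*} [AddCommGroup V] [Module (ZMod 2) V] [DecidableEq V]

lemma z2_add_self (v : V) : v + v = 0 := by
  have h : (2 : ZMod 2) • v = 0 := by
    have h2 : (2 : ZMod 2) = 0 := by decide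
    rw [h2, zero_smul]
  rwa [two_smul] at h

lemma z2_neg (v : V) : -v = v := neg_eq_of_add_eq_zero_left (z2_add_self v)

lemma countP_pair (s : Multiset V) (x y : V) (hxy : x ≠ y) :
    Multiset.countP (fun a => a = x ∨ a = y) s = s.count x + s.count y := by
  induction s using Multiset.induction with
  | empty => simp
  | cons a s ih =>
      rw [Multiset.countP_cons, Multiset.count_cons, Multiset.count_cons, ih]
      by_cases h1 : a = x <;> by_cases h2 : a = y
      · exact absurd (h1.symm.trans h2) hxy
      · rw [if_pos (Or.inl h1), if_pos h1.symm,
          if_neg (show ¬ y = a from fun hh => h2 hh.symm)]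
        omega
      · rw [if_pos (Or.inr h2), if_neg (show ¬ x = a from fun hh => h1 hh.symm),
          if_pos h2.symm]
        omega
      · rw [if_neg (show ¬ (a = x ∨ a = y) from fun hh => hh.elim h1 h2),
          if_neg (show ¬ x = a from fun hh => h1 hh.symm),
          if_neg (show ¬ y = a from fun hh => h2 hh.symm)]
        omega

lemma congMod_count {ρ : V} (hρ : ρ ≠ 0) {A B : Multiset V} (h : CongMod ρ A B) (x : V) :
    A.count x + A.count (x + ρ) = B.count x + B.count (x + ρ) := by
  classical
  have h01 : ∀ c : ZMod 2, c = 0 ∨ c = 1 := by decide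
  have hxρ : x ≠ x + ρ := fun hh => hρ (left_eq_add.mp hh)
  have hq : ∀ a : V, ((Submodule.span (ZMod 2) {ρ}).mkQ x = (Submodule.span (ZMod 2) {ρ}).mkQ a)
      = (a = x ∨ a = x + ρ) := by
    intro a
    simp only [eq_iff_iff]
    rw [Submodule.mkQ_apply, Submodule.mkQ_apply, Submodule.Quotient.eq,
        Submodule.mem_span_singleton]
    constructor
    · rintro ⟨c, hc⟩
      rcases h01 c with rfl | rfl
      · left
        rw [zero_smul] at hc
        exact (sub_eq_zero.mp hc.symm).symm
      · right
        rw [one_smul] at hc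
        have ha : a = x - ρ := by rw [hc]; abel
        rw [ha, sub_eq_add_neg, z2_neg]
    · rintro (rfl | rfl)
      · exact ⟨0, by simp⟩
      · refine ⟨1, ?_⟩
        rw [one_smul, show x - (x + ρ) = -ρ by abel, z2_neg]
  have hc := congrArg (Multiset.count ((Submodule.span (ZMod 2) {ρ}).mkQ x)) h
  rw [Multiset.count_map, Multiset.count_map, ← Multiset.countP_eq_card_filter,
      ← Multiset.countP_eq_card_filter] at hc
  have eA : Multiset.countP
      (fun a => (Submodule.span (ZMod 2) {ρ}).mkQ x = (Submodule.span (ZMod 2) {ρ}).mkQ a) A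
      = A.count x + A.count (x + ρ) := by
    rw [Multiset.countP_congr rfl (fun a _ => hq a)]
    exact countP_pair A x (x + ρ) hxρ
  have eB : Multiset.countP
      (fun a => (Submodule.span (ZMod 2) {ρ}).mkQ x = (Submodule.span (ZMod 2) {ρ}).mkQ a) B
      = B.count x + B.count (x + ρ) := by
    rw [Multiset.countP_congr rfl (fun a _ => hq a)]
    exact countP_pair B x (x + ρ) hxρ
  rw [eA, eB] at hc
  exact hc

lemma sum_mem_aux (X Y Z Xo Yo Zo : Multiset V) (x y : V)
    (h1 : ∀ v : V, Y.count v + Zo.count v + (Y.count (v + x) + Zo.count (v + x))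
        = Z.count v + Yo.count v + (Z.count (v + x) + Yo.count (v + x)))
    (h2 : ∀ v : V, X.count v + Zo.count v + (X.count (v + y) + Zo.count (v + y))
        = Z.count v + Xo.count v + (Z.count (v + y) + Xo.count (v + y)))
    (hx1 : Xo.count x < X.count x) (hy1 : Yo.count y < Y.count y)
    (hZox : Zo.count x = 0) (hZx : Z.count x = 0)
    (hZoy : Zo.count y = 0) (hZy : Z.count y = 0)
    (hXoYo : ∀ v, v ∈ Xo → v ∈ Yo → False) :
    Zo.count (x + y) < Z.count (x + y) := by
  have hty : x + y + x = y := by rw [add_comm x y, add_assoc, z2_add_self, add_zero]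
  have htx : x + y + y = x := by rw [add_assoc, z2_add_self, add_zero]
  have e1 := h1 (x + y); rw [hty] at e1
  have e2 := h2 (x + y); rw [htx] at e2
  have hcase : Yo.count (x + y) = 0 ∨ Xo.count (x + y) = 0 := by
    by_contra hcc
    push_neg at hcc
    exact hXoYo (x + y) (Multiset.count_pos.mp (Nat.pos_of_ne_zero hcc.2))
      (Multiset.count_pos.mp (Nat.pos_of_ne_zero hcc.1))
  omega

lemma mem_sub_inter₁ {A B : Multiset V} {x : V} : x ∈ A - (A ∩ B) ↔ B.count x < A.count x := by
  rw [← Multiset.count_pos, Multiset.count_sub, Multiset.count_inter]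
  omega

lemma mem_sub_inter₂ {A B : Multiset V} {x : V} : x ∈ B - (A ∩ B) ↔ A.count x < B.count x := by
  rw [← Multiset.count_pos, Multiset.count_sub, Multiset.count_inter]
  omega

end Aux


/- Four-vertex hypotheses: `W, B, C, D, E, H, L` model `ω̂, β̂, γ̂, δ̂, ε̂, η̂, λ̂`. -/
theorem four_fixed_points_sum_relations
    {V : Type*} [AddCommGroup V] [Module (ZMod 2) V] [FiniteDimensional (ZMod 2) V]
    [DecidableEq V]
    (k n : ℕ) (hk : Module.finrank (ZMod 2) V = k) (hk3 : 3 ≤ k)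
    (W B C D E H L : Multiset V)
    (hW0 : ∀ v ∈ W, v ≠ (0 : V)) (hB0 : ∀ v ∈ B, v ≠ (0 : V)) (hC0 : ∀ v ∈ C, v ≠ (0 : V))
    (hD0 : ∀ v ∈ D, v ≠ (0 : V)) (hE0 : ∀ v ∈ E, v ≠ (0 : V)) (hH0 : ∀ v ∈ H, v ≠ (0 : V))
    (hL0 : ∀ v ∈ L, v ≠ (0 : V))
    (Ap Aq Ar As : Multiset V)
    (hAp : Ap = W + B + C + D) (hAq : Aq = W + B + E + H)
    (hAr : Ar = W + E + C + L) (hAs : As = W + D + H + L)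
    (hcardp : Multiset.card Ap = n) (hcardq : Multiset.card Aq = n)
    (hcardr : Multiset.card Ar = n) (hcards : Multiset.card As = n)
    (hpq : Ap ≠ Aq) (hpr : Ap ≠ Ar) (hps : Ap ≠ As)
    (hqr : Aq ≠ Ar) (hqs : Aq ≠ As) (hrs : Ar ≠ As)
    (hspanp : Submodule.span (ZMod 2) {v : V | v ∈ Ap} = ⊤)
    (hspanq : Submodule.span (ZMod 2) {v : V | v ∈ Aq} = ⊤)
    (hspanr : Submodule.span (ZMod 2) {v : V | v ∈ Ar} = ⊤)
    (hspans : Submodule.span (ZMod 2) {v : V | v ∈ As} = ⊤)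
    (hWB : ∀ v, v ∈ W → v ∈ B → False) (hWC : ∀ v, v ∈ W → v ∈ C → False)
    (hWD : ∀ v, v ∈ W → v ∈ D → False) (hWE : ∀ v, v ∈ W → v ∈ E → False)
    (hWH : ∀ v, v ∈ W → v ∈ H → False) (hWL : ∀ v, v ∈ W → v ∈ L → False)
    (hBC : ∀ v, v ∈ B → v ∈ C → False) (hBD : ∀ v, v ∈ B → v ∈ D → False)
    (hBE : ∀ v, v ∈ B → v ∈ E → False) (hBH : ∀ v, v ∈ B → v ∈ H → False)
    (hCD : ∀ v, v ∈ C → v ∈ D → False) (hCE : ∀ v, v ∈ C → v ∈ E → False)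
    (hCL : ∀ v, v ∈ C → v ∈ L → False)
    (hDH : ∀ v, v ∈ D → v ∈ H → False) (hDL : ∀ v, v ∈ D → v ∈ L → False)
    (hEH : ∀ v, v ∈ E → v ∈ H → False) (hEL : ∀ v, v ∈ E → v ∈ L → False)
    (hHL : ∀ v, v ∈ H → v ∈ L → False)
    (hP2B : ∀ β ∈ B, CongMod β Ap Aq)
    (hP2C : ∀ γ ∈ C, CongMod γ Ap Ar)
    (hP2D : ∀ δ ∈ D, CongMod δ Ap As)
    (hP2E : ∀ ε ∈ E, CongMod ε Aq Ar)
    (hP2H : ∀ η ∈ H, CongMod η Aq As)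
    (hP2L : ∀ lam ∈ L, CongMod lam Ar As)
    (hP2W : ∀ ξ ∈ W, CongMod ξ Ap Aq ∧ CongMod ξ Ap Ar ∧ CongMod ξ Ap As ∧
        CongMod ξ Aq Ar ∧ CongMod ξ Aq As ∧ CongMod ξ Ar As)
    (B0 B1 L1 C0 C1 H1 D0 D1 E1 : Multiset V)
    (hB0def : B0 = B ∩ L) (hB1def : B1 = B - B0) (hL1def : L1 = L - B0)
    (hC0def : C0 = C ∩ H) (hC1def : C1 = C - C0) (hH1def : H1 = H - C0)
    (hD0def : D0 = D ∩ E) (hD1def : D1 = D - D0) (hE1def : E1 = E - D0)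
    :
    ∀ β ∈ B1, ∀ γ ∈ C1, ∀ δ ∈ D1, ∀ ε ∈ E1, ∀ η ∈ H1, ∀ lam ∈ L1,
      β + γ ∈ E1 ∧ β + δ ∈ H1 ∧ β + η ∈ D1 ∧ β + ε ∈ C1 ∧
      γ + δ ∈ L1 ∧ γ + ε ∈ B1 ∧ γ + lam ∈ D1 ∧
      δ + η ∈ B1 ∧ δ + lam ∈ C1 ∧
      ε + η ∈ L1 ∧ ε + lam ∈ H1 ∧ η + lam ∈ E1 := by
  intro β hβ γ hγ δ hδ ε hε η hη lam hlam
  subst hAp hAq hAr hAs hB0def hC0def hD0def hB1def hL1def hC1def hH1def hD1def hE1def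
  have hβB : β ∈ B := Multiset.mem_of_le tsub_le_self hβ
  have hγC : γ ∈ C := Multiset.mem_of_le tsub_le_self hγ
  have hδD : δ ∈ D := Multiset.mem_of_le tsub_le_self hδ
  have hεE : ε ∈ E := Multiset.mem_of_le tsub_le_self hε
  have hηH : η ∈ H := Multiset.mem_of_le tsub_le_self hη
  have hlamL : lam ∈ L := Multiset.mem_of_le tsub_le_self hlam
  have hβ1 : L.count β < B.count β := mem_sub_inter₁.mp hβ
  have hγ1 : H.count γ < C.count γ := mem_sub_inter₁.mp hγ
  have hδ1 : E.count δ < D.count δ := mem_sub_inter₁.mp hδ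
  have hε1 : D.count ε < E.count ε := mem_sub_inter₂.mp hε
  have hη1 : C.count η < H.count η := mem_sub_inter₂.mp hη
  have hlam1 : B.count lam < L.count lam := mem_sub_inter₂.mp hlam
  have zc : ∀ {P Q : Multiset V} {v : V}, v ∈ P → (∀ u, u ∈ P → u ∈ Q → False) →
      Q.count v = 0 := fun hv hd => Multiset.count_eq_zero.mpr fun hh => hd _ hv hh
  have zc' : ∀ {P Q : Multiset V} {v : V}, v ∈ P → (∀ u, u ∈ Q → u ∈ P → False) →
      Q.count v = 0 := fun hv hd => Multiset.count_eq_zero.mpr fun hh => hd _ hh hv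
  have zCβ : C.count β = 0 := zc hβB hBC
  have zDβ : D.count β = 0 := zc hβB hBD
  have zEβ : E.count β = 0 := zc hβB hBE
  have zHβ : H.count β = 0 := zc hβB hBH
  have zBγ : B.count γ = 0 := zc' hγC hBC
  have zDγ : D.count γ = 0 := zc hγC hCD
  have zEγ : E.count γ = 0 := zc hγC hCE
  have zLγ : L.count γ = 0 := zc hγC hCL
  have zBδ : B.count δ = 0 := zc' hδD hBD
  have zCδ : C.count δ = 0 := zc' hδD hCD
  have zHδ : H.count δ = 0 := zc hδD hDH
  have zLδ : L.count δ = 0 := zc hδD hDL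
  have zBε : B.count ε = 0 := zc' hεE hBE
  have zCε : C.count ε = 0 := zc' hεE hCE
  have zHε : H.count ε = 0 := zc hεE hEH
  have zLε : L.count ε = 0 := zc hεE hEL
  have zBη : B.count η = 0 := zc' hηH hBH
  have zDη : D.count η = 0 := zc' hηH hDH
  have zEη : E.count η = 0 := zc' hηH hEH
  have zLη : L.count η = 0 := zc hηH hHL
  have zClam : C.count lam = 0 := zc' hlamL hCL
  have zDlam : D.count lam = 0 := zc' hlamL hDL
  have zElam : E.count lam = 0 := zc' hlamL hEL
  have zHlam : H.count lam = 0 := zc' hlamL hHL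
  have cB : ∀ w : V, C.count w + D.count w + (C.count (w + β) + D.count (w + β))
      = E.count w + H.count w + (E.count (w + β) + H.count (w + β)) := by
    intro w
    have hcnt := congMod_count (hB0 β hβB) (hP2B β hβB) w
    simp only [Multiset.count_add] at hcnt
    omega
  have cC : ∀ w : V, B.count w + D.count w + (B.count (w + γ) + D.count (w + γ))
      = E.count w + L.count w + (E.count (w + γ) + L.count (w + γ)) := by
    intro w
    have hcnt := congMod_count (hC0 γ hγC) (hP2C γ hγC) w
    simp only [Multiset.count_add] at hcnt
    omega
  have cD : ∀ w : V, B.count w + C.count w + (B.count (w + δ) + C.count (w + δ))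
      = H.count w + L.count w + (H.count (w + δ) + L.count (w + δ)) := by
    intro w
    have hcnt := congMod_count (hD0 δ hδD) (hP2D δ hδD) w
    simp only [Multiset.count_add] at hcnt
    omega
  have cE : ∀ w : V, B.count w + H.count w + (B.count (w + ε) + H.count (w + ε))
      = C.count w + L.count w + (C.count (w + ε) + L.count (w + ε)) := by
    intro w
    have hcnt := congMod_count (hE0 ε hεE) (hP2E ε hεE) w
    simp only [Multiset.count_add] at hcnt
    omega
  have cH : ∀ w : V, B.count w + E.count w + (B.count (w + η) + E.count (w + η))
      = D.count w + L.count w + (D.count (w + η) + L.count (w + η)) := by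
    intro w
    have hcnt := congMod_count (hH0 η hηH) (hP2H η hηH) w
    simp only [Multiset.count_add] at hcnt
    omega
  have cL : ∀ w : V, C.count w + E.count w + (C.count (w + lam) + E.count (w + lam))
      = D.count w + H.count w + (D.count (w + lam) + H.count (w + lam)) := by
    intro w
    have hcnt := congMod_count (hL0 lam hlamL) (hP2L lam hlamL) w
    simp only [Multiset.count_add] at hcnt
    omega
  have r1 : Multiset.count (β + γ) D < Multiset.count (β + γ) E :=
    sum_mem_aux B C E L H D β γ (fun w => by have := cB w; omega) (fun w => by have := cC w; omega)
      hβ1 hγ1 zDβ zEβ zDγ zEγ (fun w hw1 hw2 => hHL w hw2 hw1)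
  have r2 : Multiset.count (β + δ) C < Multiset.count (β + δ) H :=
    sum_mem_aux B D H L E C β δ (fun w => by have := cB w; omega) (fun w => by have := cD w; omega)
      hβ1 hδ1 zCβ zHβ zCδ zHδ (fun w hw1 hw2 => hEL w hw2 hw1)
  have r3 : Multiset.count (β + η) E < Multiset.count (β + η) D :=
    sum_mem_aux B H D L C E β η (fun w => by have := cB w; omega) (fun w => by have := cH w; omega)
      hβ1 hη1 zEβ zDβ zEη zDη (fun w hw1 hw2 => hCL w hw2 hw1)
  have r4 : Multiset.count (β + ε) H < Multiset.count (β + ε) C :=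
    sum_mem_aux B E C L D H β ε (fun w => by have := cB w; omega) (fun w => by have := cE w; omega)
      hβ1 hε1 zHβ zCβ zHε zCε (fun w hw1 hw2 => hDL w hw2 hw1)
  have r5 : Multiset.count (γ + δ) B < Multiset.count (γ + δ) L :=
    sum_mem_aux C D L H E B γ δ (fun w => by have := cC w; omega) (fun w => by have := cD w; omega)
      hγ1 hδ1 zBγ zLγ zBδ zLδ (fun w hw1 hw2 => hEH w hw2 hw1)
  have r6 : Multiset.count (γ + ε) L < Multiset.count (γ + ε) B :=
    sum_mem_aux C E B H D L γ ε (fun w => by have := cC w; omega) (fun w => by have := cE w; omega)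
      hγ1 hε1 zLγ zBγ zLε zBε (fun w hw1 hw2 => hDH w hw2 hw1)
  have r7 : Multiset.count (γ + lam) E < Multiset.count (γ + lam) D :=
    sum_mem_aux C L D H B E γ lam (fun w => by have := cC w; omega) (fun w => by have := cL w; omega)
      hγ1 hlam1 zEγ zDγ zElam zDlam (fun w hw1 hw2 => hBH w hw2 hw1)
  have r8 : Multiset.count (δ + η) L < Multiset.count (δ + η) B :=
    sum_mem_aux D H B E C L δ η (fun w => by have := cD w; omega) (fun w => by have := cH w; omega)
      hδ1 hη1 zLδ zBδ zLη zBη (fun w hw1 hw2 => hCE w hw2 hw1)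
  have r9 : Multiset.count (δ + lam) H < Multiset.count (δ + lam) C :=
    sum_mem_aux D L C E B H δ lam (fun w => by have := cD w; omega) (fun w => by have := cL w; omega)
      hδ1 hlam1 zHδ zCδ zHlam zClam (fun w hw1 hw2 => hBE w hw2 hw1)
  have r10 : Multiset.count (ε + η) B < Multiset.count (ε + η) L :=
    sum_mem_aux E H L D C B ε η (fun w => by have := cE w; omega) (fun w => by have := cH w; omega)
      hε1 hη1 zBε zLε zBη zLη (fun w hw1 hw2 => hCD w hw2 hw1)
  have r11 : Multiset.count (ε + lam) C < Multiset.count (ε + lam) H :=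
    sum_mem_aux E L H D B C ε lam (fun w => by have := cE w; omega) (fun w => by have := cL w; omega)
      hε1 hlam1 zCε zHε zClam zHlam (fun w hw1 hw2 => hBD w hw2 hw1)
  have r12 : Multiset.count (η + lam) D < Multiset.count (η + lam) E :=
    sum_mem_aux H L E C B D η lam (fun w => by have := cH w; omega) (fun w => by have := cL w; omega)
      hη1 hlam1 zDη zEη zDlam zElam (fun w hw1 hw2 => hBC w hw2 hw1)
  exact ⟨mem_sub_inter₂.mpr r1, mem_sub_inter₂.mpr r2, mem_sub_inter₁.mpr r3, mem_sub_inter₁.mpr r4, mem_sub_inter₂.mpr r5, mem_sub_inter₁.mpr r6, mem_sub_inter₁.mpr r7, mem_sub_inter₁.mpr r8, mem_sub_inter₁.mpr r9, mem_sub_inter₂.mpr r10, mem_sub_inter₂.mpr r11, mem_sub_inter₂.mpr r12⟩
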